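/- arXiv:1811.02556 — 2 statements merged into one kernel-verified Lean document; each statement's English description precedes it below -/
import Mathlib

section
/- There exists x_0 such that for every real number x ≥ x_0 and every real number y with (log x)² ≤ y ≤ exp(log x / log log x), one has Ψ(x, y) ≤ x·exp(−(1/2)·(log x / log y)·log(log x / log y)), where Ψ(x, y) = #{n ≤ x : every prime factor of n is ≤ y} is the number of y-smooth positive integers up to x. -/
open Finset Real

set_option maxHeartbeats 1000000

lemma aux_geom {t : ℝ} (h0 : 0 ≤ t) (h1 : t ≤ 3/4) (m : ℕ) :
    ∑ j ∈ Finset.range m, t ^ j ≤ Real.exp (4 * t) := by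
  have ht1 : t < 1 := by linarith
  have hp : (0:ℝ) ≤ t ^ m := pow_nonneg h0 m
  have h2 : ∑ j ∈ Finset.range m, t ^ j ≤ (1 - t)⁻¹ := by
    rw [geom_sum_eq (ne_of_lt ht1), div_le_iff_of_neg (by linarith : t - 1 < 0)]
    have hne : (1:ℝ) - t ≠ 0 := by linarith
    have he : (1 - t)⁻¹ * (t - 1) = -1 := by field_simp; ring
    rw [he]; linarith
  have h3 : (1 - t)⁻¹ ≤ 1 + 4 * t := by
    rw [inv_le_iff_one_le_mul₀' (by linarith : (0:ℝ) < 1 - t)]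
    nlinarith
  have h4 : 1 + 4 * t ≤ Real.exp (4 * t) := by
    have := Real.add_one_le_exp (4 * t); linarith
  linarith

lemma aux_count (k : ℕ) :
    ((Finset.Ico (2^k) (2^(k+1))).filter Nat.Prime).card * k ≤ 2^(k+2) := by
  set B := (Finset.Ico (2^k) (2^(k+1))).filter Nat.Prime with hB
  have h1 : (2^k) ^ B.card ≤ ∏ p ∈ B, p := by
    rw [← Finset.prod_const]
    refine Finset.prod_le_prod' ?_
    intro p hp
    simp only [hB, Finset.mem_filter, Finset.mem_Ico] at hp
    exact hp.1.1
  have h2 : ∏ p ∈ B, p ≤ primorial (2^(k+1)) := by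
    unfold primorial
    refine Finset.prod_le_prod_of_subset_of_one_le' ?_ ?_
    · intro p hp
      simp only [hB, Finset.mem_filter, Finset.mem_Ico, Finset.mem_range] at hp ⊢
      exact ⟨by omega, hp.2⟩
    · intro p hp _
      simp only [Finset.mem_filter] at hp
      exact hp.2.one_lt.le
  have h3 : primorial (2^(k+1)) ≤ 4 ^ (2^(k+1)) := primorial_le_4_pow _
  have h4 : (4:ℕ) ^ (2^(k+1)) = 2 ^ (2^(k+2)) := by
    rw [show (4:ℕ) = 2^2 by norm_num, ← pow_mul]
    ring_nf
  have h5 : (2:ℕ)^(B.card * k) ≤ 2 ^ (2^(k+2)) := by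
    calc (2:ℕ)^(B.card * k) = (2^k) ^ B.card := by rw [mul_comm, pow_mul]
    _ ≤ primorial (2^(k+1)) := le_trans h1 h2
    _ ≤ 2 ^ (2^(k+2)) := by rw [← h4]; exact h3
  exact (Nat.pow_le_pow_iff_right (by norm_num : 1 < 2)).mp h5

lemma aux_factor {P : Finset ℕ} {n : ℕ} (hn : n ≠ 0) (hsub : n.primeFactors ⊆ P) (σ : ℝ) :
    (n:ℝ) ^ (-σ) = ∏ p ∈ P, ((p:ℝ) ^ (-σ)) ^ (n.factorization p) := by
  have hnat : n = ∏ p ∈ P, p ^ (n.factorization p) := by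
    have h1 : ∏ p ∈ n.primeFactors, p ^ (n.factorization p) = ∏ p ∈ P, p ^ (n.factorization p) := by
      refine Finset.prod_subset hsub (fun p _ hp => ?_)
      rw [← Nat.support_factorization, Finsupp.notMem_support_iff] at hp
      rw [hp, pow_zero]
    rw [← h1]
    conv_lhs => rw [← Nat.factorization_prod_pow_eq_self hn]
    rfl
  have hreal : (n:ℝ) = ∏ p ∈ P, ((p:ℝ) ^ (n.factorization p : ℕ)) := by
    conv_lhs => rw [hnat]
    push_cast
    rfl
  rw [hreal, ← Real.finset_prod_rpow P _ (fun p _ => by positivity) (-σ)]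
  refine Finset.prod_congr rfl (fun p hp => ?_)
  rw [← Real.rpow_natCast (p:ℝ) (n.factorization p), ← Real.rpow_mul (Nat.cast_nonneg p),
    mul_comm, Real.rpow_mul (Nat.cast_nonneg p), Real.rpow_natCast]

lemma aux_euler (P : Finset ℕ) (N : ℕ) (S : Finset ℕ)
    (hS : ∀ n ∈ S, 1 ≤ n ∧ n ≤ N ∧ n.primeFactors ⊆ P) (σ : ℝ) :
    ∑ n ∈ S, (n:ℝ) ^ (-σ) ≤ ∏ p ∈ P, ∑ j ∈ Finset.range (N+1), ((p:ℝ) ^ (-σ)) ^ j := by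
  classical
  rw [Finset.prod_sum]
  set h : ((a : ℕ) → a ∈ P → ℕ) → ℝ :=
    fun g => ∏ pp ∈ P.attach, (((pp.1 : ℕ) : ℝ) ^ (-σ)) ^ (g pp.1 pp.2) with hh
  set φ : ℕ → ((a : ℕ) → a ∈ P → ℕ) := fun n => fun p _ => n.factorization p with hφ
  have hterm : ∀ n ∈ S, (n:ℝ) ^ (-σ) = h (φ n) := by
    intro n hn
    obtain ⟨h1, h2, h3⟩ := hS n hn
    rw [aux_factor (by omega) h3 σ, hh]
    rw [← Finset.prod_attach P (fun p => (((p:ℕ):ℝ) ^ (-σ)) ^ (n.factorization p))]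
  have hinj : ∀ n ∈ S, ∀ m ∈ S, φ n = φ m → n = m := by
    intro n hn m hm he
    obtain ⟨hn1, _, hn3⟩ := hS n hn
    obtain ⟨hm1, _, hm3⟩ := hS m hm
    refine Nat.factorization_inj (by simp; omega) (by simp; omega) ?_
    ext p
    by_cases hp : p ∈ P
    · exact congrFun (congrFun he p) hp
    · have h1 : p ∉ n.primeFactors := fun hc => hp (hn3 hc)
      have h2 : p ∉ m.primeFactors := fun hc => hp (hm3 hc)
      rw [← Nat.support_factorization, Finsupp.notMem_support_iff] at h1 h2
      rw [h1, h2]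
  have hmem : ∀ n ∈ S, φ n ∈ P.pi (fun _ => Finset.range (N+1)) := by
    intro n hn
    obtain ⟨h1, h2, _⟩ := hS n hn
    rw [Finset.mem_pi]
    intro p hp
    simp only [hφ, Finset.mem_range]
    have := Nat.factorization_lt p (show n ≠ 0 by omega)
    omega
  calc ∑ n ∈ S, (n:ℝ) ^ (-σ) = ∑ n ∈ S, h (φ n) := Finset.sum_congr rfl hterm
    _ = ∑ g ∈ S.image φ, h g := (Finset.sum_image hinj).symm
    _ ≤ ∑ g ∈ P.pi (fun _ => Finset.range (N+1)), h g := by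
        refine Finset.sum_le_sum_of_subset_of_nonneg ?_ (fun g _ _ => ?_)
        · intro g hg
          rw [Finset.mem_image] at hg
          obtain ⟨n, hn, rfl⟩ := hg
          exact hmem n hn
        · exact Finset.prod_nonneg (fun pp _ => pow_nonneg (Real.rpow_nonneg (Nat.cast_nonneg _) _) _)

lemma aux_sum_blocks (P : Finset ℕ) (hP : ∀ p ∈ P, p.Prime) (Y : ℕ) (hPY : ∀ p ∈ P, p ≤ Y)
    (σ : ℝ) (hσ : 0 ≤ σ) :
    ∑ p ∈ P, (p:ℝ) ^ (-σ) ≤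
      ∑ k ∈ Finset.Icc 1 (Nat.log 2 Y), (4 * 2^k / k) * ((2:ℝ)^k) ^ (-σ) := by
  classical
  set K := Nat.log 2 Y with hK
  set B : ℕ → Finset ℕ := fun k => (Finset.Ico (2^k) (2^(k+1))).filter Nat.Prime with hB
  have hBk : ∀ k, ∀ p ∈ B k, Nat.log 2 p = k := by
    intro k p hp
    simp only [hB, Finset.mem_filter, Finset.mem_Ico] at hp
    exact Nat.log_eq_of_pow_le_of_lt_pow hp.1.1 hp.1.2
  have hsub : P ⊆ (Finset.Icc 1 K).biUnion B := by
    intro p hp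
    have hprime := hP p hp
    have h2 : 2 ≤ p := hprime.two_le
    rw [Finset.mem_biUnion]
    refine ⟨Nat.log 2 p, ?_, ?_⟩
    · rw [Finset.mem_Icc]
      constructor
      · exact Nat.log_pos (by norm_num) h2
      · exact Nat.log_mono_right (hPY p hp)
    · simp only [hB, Finset.mem_filter, Finset.mem_Ico]
      exact ⟨⟨Nat.pow_log_le_self 2 (by omega), Nat.lt_pow_succ_log_self (by norm_num) p⟩, hprime⟩
  have hdisj : (↑(Finset.Icc 1 K) : Set ℕ).PairwiseDisjoint B := by
    intro k1 _ k2 _ hne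
    simp only [Function.onFun, Finset.disjoint_left]
    intro p h1 h2
    exact hne ((hBk k1 p h1).symm.trans (hBk k2 p h2))
  calc ∑ p ∈ P, (p:ℝ) ^ (-σ)
      ≤ ∑ p ∈ (Finset.Icc 1 K).biUnion B, (p:ℝ) ^ (-σ) := by
        refine Finset.sum_le_sum_of_subset_of_nonneg hsub (fun p _ _ => ?_)
        exact Real.rpow_nonneg (Nat.cast_nonneg _) _
    _ = ∑ k ∈ Finset.Icc 1 K, ∑ p ∈ B k, (p:ℝ) ^ (-σ) := Finset.sum_biUnion hdisj
    _ ≤ ∑ k ∈ Finset.Icc 1 K, (4 * 2^k / k) * ((2:ℝ)^k) ^ (-σ) := by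
        refine Finset.sum_le_sum (fun k hk => ?_)
        rw [Finset.mem_Icc] at hk
        have hknz : (0:ℝ) < k := by exact_mod_cast hk.1
        have hterm : ∀ p ∈ B k, (p:ℝ) ^ (-σ) ≤ ((2:ℝ)^k) ^ (-σ) := by
          intro p hp
          simp only [hB, Finset.mem_filter, Finset.mem_Ico] at hp
          refine Real.rpow_le_rpow_of_nonpos (by positivity) ?_ (by linarith)
          calc ((2:ℝ)^k) = ((2^k : ℕ) : ℝ) := by push_cast; ring
            _ ≤ (p:ℝ) := by exact_mod_cast hp.1.1
        calc ∑ p ∈ B k, (p:ℝ) ^ (-σ) ≤ (B k).card * ((2:ℝ)^k) ^ (-σ) := by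
              have := Finset.sum_le_card_nsmul (B k) _ _ hterm
              rwa [nsmul_eq_mul] at this
          _ ≤ (4 * 2^k / k) * ((2:ℝ)^k) ^ (-σ) := by
              refine mul_le_mul_of_nonneg_right ?_ (Real.rpow_nonneg (by positivity) _)
              rw [le_div_iff₀ hknz]
              have h := aux_count k
              have : ((B k).card * k : ℝ) ≤ (2:ℝ)^(k+2) := by exact_mod_cast h
              calc ((B k).card : ℝ) * k ≤ (2:ℝ)^(k+2) := this
                _ = 4 * 2^k := by ring
lemma aux_analytic (K : ℕ) (δ u ℓ : ℝ) (hδ0 : 0 < δ) (hδ : δ ≤ 1/2)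
    (hKl : (K:ℝ) * Real.log 2 ≤ ℓ) (hl2 : 2 ≤ ℓ)
    (hδl : δ * ℓ = Real.log u) (hu : Real.exp 360 ≤ u) (hlogl : Real.log ℓ ≤ u) :
    ∑ k ∈ Finset.Icc 1 K, (4 * 2^k / k) * ((2:ℝ)^k) ^ (-(1-δ)) ≤ 36 * u := by
  have hlog2 : (0.6931471803 : ℝ) < Real.log 2 := Real.log_two_gt_d9
  have hlog2' : Real.log 2 ≤ 1 := by
    have := Real.log_le_sub_one_of_pos (by norm_num : (0:ℝ) < 2); linarith
  have hu1 : (1:ℝ) ≤ u := le_trans (by nlinarith [Real.add_one_le_exp (360:ℝ)]) hu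
  have hlogu : (360:ℝ) ≤ Real.log u := by
    calc (360:ℝ) = Real.log (Real.exp 360) := (Real.log_exp _).symm
      _ ≤ Real.log u := Real.log_le_log (by positivity) hu
  set r := Real.exp (δ * Real.log 2) with hr
  have hr1 : 1 < r := by
    rw [hr, ← Real.exp_zero]
    exact Real.exp_lt_exp.mpr (by positivity)
  have hrk : ∀ k : ℕ, r ^ k = Real.exp (k * (δ * Real.log 2)) := by
    intro k; rw [hr, ← Real.exp_nat_mul]
  have hterm : ∀ k : ℕ, 1 ≤ k → (4 * 2^k / k) * ((2:ℝ)^k) ^ (-(1-δ)) = (4 / k) * r ^ k := by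
    intro k hk
    have h2k : (0:ℝ) < 2^k := by positivity
    rw [Real.rpow_def_of_pos h2k, Real.log_pow, hrk]
    rw [show (4 * 2^k / k : ℝ) = (4/k) * 2^k by ring]
    have h2ke : (2:ℝ)^k = Real.exp (k * Real.log 2) := by
      rw [← Real.exp_log h2k, Real.log_pow]
    rw [mul_assoc, h2ke, ← Real.exp_add]
    ring_nf
  set k1 := ⌈1/δ⌉₊ with hk1def
  have hlogupos : (0:ℝ) < Real.log u := by linarith
  have hδinv : 1/δ = ℓ / Real.log u := by
    rw [← hδl]; field_simp
  have hk1ge : (1:ℝ)/δ ≤ (k1:ℝ) := Nat.le_ceil _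
  have hk1lt : (k1:ℝ) ≤ 1/δ + 1 := le_of_lt (Nat.ceil_lt_add_one (by positivity))
  have hk1pos : 2 ≤ (k1:ℝ) := by
    have h : (2:ℝ) ≤ 1/δ := by
      rw [le_div_iff₀ hδ0]; linarith
    linarith
  have hk1posn : 1 ≤ k1 := by
    have : (1:ℝ) ≤ (k1:ℝ) := by linarith
    exact_mod_cast this
  have hk1l : (k1:ℝ) ≤ ℓ := by
    rw [hδinv] at hk1lt
    have h1 : ℓ / Real.log u ≤ ℓ / 360 := by
      apply div_le_div_of_nonneg_left (by linarith) (by norm_num) hlogu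
    have : ℓ / 360 + 1 ≤ ℓ := by linarith
    linarith
  have hrk3 : ∀ k : ℕ, k ≤ k1 → r ^ k ≤ 3 := by
    intro k hk
    rw [hrk]
    have h1 : (k:ℝ) * (δ * Real.log 2) ≤ (3/2) * Real.log 2 := by
      have hkr : (k:ℝ) ≤ (k1:ℝ) := by exact_mod_cast hk
      have : (k:ℝ) * δ ≤ 1 + δ := by
        have := mul_le_mul_of_nonneg_right (le_trans hkr hk1lt) hδ0.le
        calc (k:ℝ) * δ ≤ (1/δ + 1) * δ := this
          _ = 1 + δ := by field_simp
      nlinarith [hlog2]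
    have h2 : Real.exp ((k:ℝ) * (δ * Real.log 2)) ≤ Real.exp ((3/2) * Real.log 2) :=
      Real.exp_le_exp.mpr h1
    refine le_trans h2 ?_
    have h3 : Real.exp ((3/2) * Real.log 2) ^ 2 = 8 := by
      rw [← Real.exp_nat_mul]
      have : ((2:ℕ):ℝ) * ((3/2) * Real.log 2) = Real.log 8 := by
        rw [show (8:ℝ) = 2^(3:ℕ) by norm_num, Real.log_pow]; push_cast; ring
      rw [this, Real.exp_log (by norm_num)]
    nlinarith [Real.exp_pos ((3/2) * Real.log 2)]
  have hsum : ∑ k ∈ Finset.Icc 1 K, (4 * 2^k / k) * ((2:ℝ)^k) ^ (-(1-δ))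
      = ∑ k ∈ Finset.Icc 1 K, (4 / k) * r ^ k := by
    refine Finset.sum_congr rfl (fun k hk => ?_)
    exact hterm k (Finset.mem_Icc.mp hk).1
  rw [hsum, ← Finset.sum_filter_add_sum_filter_not (Finset.Icc 1 K) (fun k => k ≤ k1)]
  have hlow : ∑ k ∈ (Finset.Icc 1 K).filter (fun k => k ≤ k1), (4 / k) * r ^ k ≤ 24 * u := by
    have hsub : (Finset.Icc 1 K).filter (fun k => k ≤ k1) ⊆ Finset.Icc 1 k1 := by
      intro k hk
      simp only [Finset.mem_filter, Finset.mem_Icc] at hk ⊢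
      exact ⟨hk.1.1, hk.2⟩
    calc ∑ k ∈ (Finset.Icc 1 K).filter (fun k => k ≤ k1), (4 / k) * r ^ k
        ≤ ∑ k ∈ Finset.Icc 1 k1, (4 / k) * r ^ k := by
          refine Finset.sum_le_sum_of_subset_of_nonneg hsub (fun k hk _ => ?_)
          have : (0:ℝ) < r := by linarith
          positivity
      _ ≤ ∑ k ∈ Finset.Icc 1 k1, 12 * (k:ℝ)⁻¹ := by
          refine Finset.sum_le_sum (fun k hk => ?_)
          rw [Finset.mem_Icc] at hk
          have hkpos : (0:ℝ) < k := by exact_mod_cast hk.1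
          have := hrk3 k hk.2
          have hr0 : (0:ℝ) ≤ r ^ k := le_of_lt (pow_pos (by linarith) k)
          calc 4 / (k:ℝ) * r ^ k ≤ 4 / (k:ℝ) * 3 :=
                mul_le_mul_of_nonneg_left this (by positivity)
            _ = 12 * (k:ℝ)⁻¹ := by rw [div_eq_mul_inv]; ring
      _ = 12 * ∑ k ∈ Finset.Icc 1 k1, (k:ℝ)⁻¹ := by rw [Finset.mul_sum]
      _ ≤ 12 * (1 + Real.log k1) := by
          have h1 : ∑ k ∈ Finset.Icc 1 k1, (k:ℝ)⁻¹ = ((harmonic k1 : ℚ) : ℝ) := by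
            rw [harmonic_eq_sum_Icc]; push_cast; rfl
          have h2 := harmonic_le_one_add_log k1
          rw [h1]
          linarith
      _ ≤ 24 * u := by
          have h3 : Real.log k1 ≤ Real.log ℓ := Real.log_le_log (by linarith) hk1l
          linarith
  have hhigh : ∑ k ∈ (Finset.Icc 1 K).filter (fun k => ¬ k ≤ k1), (4 / k) * r ^ k ≤ 12 * u := by
    have hrpos : (0:ℝ) < r := by linarith
    have hstep : ∀ k ∈ (Finset.Icc 1 K).filter (fun k => ¬ k ≤ k1),
        (4 / k) * r ^ k ≤ (4 * δ) * r ^ k := by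
      intro k hk
      simp only [Finset.mem_filter, Finset.mem_Icc, not_le] at hk
      have hkk : (k1:ℝ) < (k:ℝ) := by exact_mod_cast hk.2
      have hkpos : (0:ℝ) < k := by linarith
      have h1 : 4 / (k:ℝ) ≤ 4 * δ := by
        rw [div_le_iff₀ hkpos]
        have h2 : 1/δ ≤ (k:ℝ) := by linarith
        rw [div_le_iff₀ hδ0] at h2
        nlinarith
      exact mul_le_mul_of_nonneg_right h1 (le_of_lt (pow_pos hrpos k))
    calc ∑ k ∈ (Finset.Icc 1 K).filter (fun k => ¬ k ≤ k1), (4 / k) * r ^ k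
        ≤ ∑ k ∈ (Finset.Icc 1 K).filter (fun k => ¬ k ≤ k1), (4 * δ) * r ^ k :=
          Finset.sum_le_sum hstep
      _ ≤ ∑ k ∈ Finset.range (K+1), (4 * δ) * r ^ k := by
          refine Finset.sum_le_sum_of_subset_of_nonneg ?_ (fun k _ _ => by positivity)
          intro k hk
          simp only [Finset.mem_filter, Finset.mem_Icc] at hk
          rw [Finset.mem_range]; omega
      _ = (4 * δ) * ((r^(K+1) - 1)/(r - 1)) := by
          rw [← Finset.mul_sum, geom_sum_eq (ne_of_gt hr1)]
      _ ≤ 12 * u := by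
          have hrK : r^(K+1) ≤ 2 * u := by
            rw [hrk]
            have h1 : ((K+1:ℕ):ℝ) * (δ * Real.log 2) ≤ Real.log u + Real.log 2 := by
              push_cast
              have h2 : (K:ℝ) * (δ * Real.log 2) ≤ δ * ℓ := by
                have := mul_le_mul_of_nonneg_left hKl hδ0.le
                nlinarith
              have h3 : δ * Real.log 2 ≤ Real.log 2 := by nlinarith
              rw [← hδl]; nlinarith
            calc Real.exp (((K+1:ℕ):ℝ) * (δ * Real.log 2))
                ≤ Real.exp (Real.log u + Real.log 2) := Real.exp_le_exp.mpr h1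
              _ = 2 * u := by
                  rw [Real.exp_add, Real.exp_log (by linarith), Real.exp_log (by norm_num)]
                  ring
          have hden : δ * Real.log 2 ≤ r - 1 := by
            have := Real.add_one_le_exp (δ * Real.log 2)
            rw [hr]; linarith
          have hrm1 : (0:ℝ) < r - 1 := by linarith
          have h4 : (r^(K+1) - 1)/(r - 1) ≤ (2*u)/(δ * Real.log 2) := by
            apply div_le_div₀ (by positivity) (by linarith) (by positivity) hden
          calc (4 * δ) * ((r^(K+1) - 1)/(r - 1)) ≤ (4 * δ) * ((2*u)/(δ * Real.log 2)) := by
                refine mul_le_mul_of_nonneg_left h4 (by positivity)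
            _ = 8 * u / Real.log 2 := by field_simp; ring
            _ ≤ 12 * u := by
                rw [div_le_iff₀ (by linarith : (0:ℝ) < Real.log 2)]
                nlinarith
  linarith


/-- `Ψ(x, y)`: the number of positive integers `n ≤ x` all of whose prime
factors are at most `y`. -/
noncomputable def smoothCount (x y : ℝ) : ℕ :=
  ((Finset.Icc 1 ⌊x⌋₊).filter
    (fun n => ∀ p : ℕ, p ∈ n.primeFactors → (p : ℝ) ≤ y)).card

theorem stmt9 : ∃ x0 : ℝ, ∀ x : ℝ, x0 ≤ x → ∀ y : ℝ,
    Real.log x ^ 2 ≤ y → y ≤ Real.exp (Real.log x / Real.log (Real.log x)) →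
    (smoothCount x y : ℝ) ≤
      x * Real.exp (-(1/2) * (Real.log x / Real.log y) *
        Real.log (Real.log x / Real.log y)) := by
  classical
  refine ⟨Real.exp (Real.exp (Real.exp 360)), fun x hx y hy1 hy2 => ?_⟩
  set L := Real.log x with hLdef
  set lL := Real.log L with hlLdef
  set ℓ := Real.log y with hℓdef
  set u := L / ℓ with hudef
  -- basic numeric facts
  have he360 : (361:ℝ) ≤ Real.exp 360 := by
    have := Real.add_one_le_exp (360:ℝ); linarith
  have hxpos : (0:ℝ) < x := lt_of_lt_of_le (Real.exp_pos _) hx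
  have hL : Real.exp (Real.exp 360) ≤ L := by
    calc Real.exp (Real.exp 360) = Real.log (Real.exp (Real.exp (Real.exp 360))) :=
          (Real.log_exp _).symm
      _ ≤ L := Real.log_le_log (Real.exp_pos _) hx
  have heee : (362:ℝ) ≤ Real.exp (Real.exp 360) := by
    have := Real.add_one_le_exp (Real.exp 360); linarith
  have hL1 : (362:ℝ) ≤ L := le_trans heee hL
  have hlL : Real.exp 360 ≤ lL := by
    calc Real.exp 360 = Real.log (Real.exp (Real.exp 360)) := (Real.log_exp _).symm
      _ ≤ lL := Real.log_le_log (Real.exp_pos _) hL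
  have hlL1 : (361:ℝ) ≤ lL := le_trans he360 hlL
  have hypos : (0:ℝ) < y := lt_of_lt_of_le (by nlinarith : (0:ℝ) < L^2) hy1
  have hℓlow : 2 * lL ≤ ℓ := by
    calc 2 * lL = Real.log (L^2) := by
          rw [Real.log_pow]; push_cast; ring
      _ ≤ ℓ := Real.log_le_log (by nlinarith) hy1
  have hℓpos : (0:ℝ) < ℓ := by nlinarith
  have hℓhigh : ℓ ≤ L / lL := by
    calc ℓ ≤ Real.log (Real.exp (L / lL)) := Real.log_le_log hypos hy2
      _ = L / lL := Real.log_exp _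
  have hℓL : ℓ ≤ L := le_trans hℓhigh (by
    rw [div_le_iff₀ (by linarith : (0:ℝ) < lL)]; nlinarith)
  have hu_low : lL ≤ u := by
    rw [hudef, le_div_iff₀ hℓpos]
    have h1 : ℓ * lL ≤ L := by
      have := mul_le_mul_of_nonneg_right hℓhigh (le_of_lt (by linarith : (0:ℝ) < lL))
      rw [div_mul_cancel₀] at this
      · linarith
      · linarith
    linarith
  have hu : Real.exp 360 ≤ u := le_trans hlL hu_low
  have hu1 : (1:ℝ) ≤ u := by linarith
  have hupos : (0:ℝ) < u := by linarith
  have hlogu360 : (360:ℝ) ≤ Real.log u := by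
    calc (360:ℝ) = Real.log (Real.exp 360) := (Real.log_exp _).symm
      _ ≤ Real.log u := Real.log_le_log (Real.exp_pos _) hu
  have huL : u ≤ L := by
    rw [hudef, div_le_iff₀ hℓpos]; nlinarith
  have hloguL : Real.log u ≤ lL := Real.log_le_log hupos huL
  set δ := Real.log u / ℓ with hδdef
  have hδ0 : (0:ℝ) < δ := by
    rw [hδdef]; positivity
  have hδhalf : δ ≤ 1/2 := by
    rw [hδdef, div_le_iff₀ hℓpos]; nlinarith
  have hδl : δ * ℓ = Real.log u := by
    rw [hδdef]; field_simp
  have hlogl_u : Real.log ℓ ≤ u := by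
    calc Real.log ℓ ≤ Real.log L := Real.log_le_log hℓpos hℓL
      _ ≤ u := hu_low
  set σ := 1 - δ with hσdef
  have hσhalf : (1/2 : ℝ) ≤ σ := by rw [hσdef]; linarith
  have hσ0 : (0:ℝ) ≤ σ := by linarith
  -- the finite sets
  set N := ⌊x⌋₊ with hNdef
  set S := ((Finset.Icc 1 N).filter
    (fun n => ∀ p : ℕ, p ∈ n.primeFactors → (p : ℝ) ≤ y)) with hSdef
  set P := ((Finset.range (⌊y⌋₊ + 1)).filter Nat.Prime) with hPdef
  have hSfacts : ∀ n ∈ S, 1 ≤ n ∧ n ≤ N ∧ n.primeFactors ⊆ P := by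
    intro n hn
    simp only [hSdef, Finset.mem_filter, Finset.mem_Icc] at hn
    refine ⟨hn.1.1, hn.1.2, fun p hp => ?_⟩
    simp only [hPdef, Finset.mem_filter, Finset.mem_range]
    refine ⟨?_, Nat.prime_of_mem_primeFactors hp⟩
    have h1 : (p:ℝ) ≤ y := hn.2 p hp
    have h2 : p ≤ ⌊y⌋₊ := Nat.le_floor h1
    omega
  -- Step A : count ≤ x^σ * sum
  have hstepA : (smoothCount x y : ℝ) ≤ x ^ σ * ∑ n ∈ S, (n:ℝ) ^ (-σ) := by
    have hcard : (smoothCount x y : ℝ) = ∑ n ∈ S, (1:ℝ) := by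
      rw [smoothCount, Finset.sum_const, nsmul_eq_mul, mul_one]
    rw [hcard, Finset.mul_sum]
    refine Finset.sum_le_sum (fun n hn => ?_)
    obtain ⟨h1, h2, _⟩ := hSfacts n hn
    have hnpos : (0:ℝ) < (n:ℝ) := by exact_mod_cast h1
    have hnx : (n:ℝ) ≤ x := by
      calc (n:ℝ) ≤ (N:ℝ) := by exact_mod_cast h2
        _ ≤ x := Nat.floor_le (le_of_lt hxpos)
    have ha : (n:ℝ) ^ σ ≤ x ^ σ := Real.rpow_le_rpow (le_of_lt hnpos) hnx hσ0
    have hb : (n:ℝ) ^ σ * (n:ℝ) ^ (-σ) = 1 := by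
      rw [← Real.rpow_add hnpos]; simp
    calc (1:ℝ) = (n:ℝ) ^ σ * (n:ℝ) ^ (-σ) := hb.symm
      _ ≤ x ^ σ * (n:ℝ) ^ (-σ) :=
          mul_le_mul_of_nonneg_right ha (Real.rpow_nonneg (le_of_lt hnpos) _)
  -- Step B : Euler product
  have hstepB : ∑ n ∈ S, (n:ℝ) ^ (-σ) ≤
      ∏ p ∈ P, ∑ j ∈ Finset.range (N+1), ((p:ℝ) ^ (-σ)) ^ j :=
    aux_euler P N S hSfacts σ
  -- Step C : product ≤ exp (4 * sum over primes)
  have hPprime : ∀ p ∈ P, p.Prime := by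
    intro p hp
    simp only [hPdef, Finset.mem_filter] at hp
    exact hp.2
  have htp : ∀ p ∈ P, 0 ≤ (p:ℝ) ^ (-σ) ∧ (p:ℝ) ^ (-σ) ≤ 3/4 := by
    intro p hp
    have hp2 : 2 ≤ p := (hPprime p hp).two_le
    have hppos : (0:ℝ) < 2 := by norm_num
    constructor
    · exact Real.rpow_nonneg (Nat.cast_nonneg _) _
    · have h1 : (p:ℝ) ^ (-σ) ≤ (2:ℝ) ^ (-σ) := by
        refine Real.rpow_le_rpow_of_nonpos hppos (by exact_mod_cast hp2) (by linarith)
      have h2 : (2:ℝ) ^ (-σ) ≤ (2:ℝ) ^ (-(1/2):ℝ) :=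
        Real.rpow_le_rpow_of_exponent_le (by norm_num) (by linarith)
      have h3 : (2:ℝ) ^ (-(1/2):ℝ) ≤ 3/4 := by
        have hsq : ((2:ℝ) ^ (-(1/2):ℝ))^2 = 1/2 := by
          rw [← Real.rpow_natCast ((2:ℝ) ^ (-(1/2):ℝ)) 2, ← Real.rpow_mul (by norm_num)]
          norm_num
        nlinarith [Real.rpow_nonneg (by norm_num : (0:ℝ) ≤ 2) (-(1/2):ℝ)]
      linarith
  have hstepC : ∏ p ∈ P, ∑ j ∈ Finset.range (N+1), ((p:ℝ) ^ (-σ)) ^ j ≤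
      Real.exp (4 * ∑ p ∈ P, (p:ℝ) ^ (-σ)) := by
    calc ∏ p ∈ P, ∑ j ∈ Finset.range (N+1), ((p:ℝ) ^ (-σ)) ^ j
        ≤ ∏ p ∈ P, Real.exp (4 * ((p:ℝ) ^ (-σ))) := by
          refine Finset.prod_le_prod (fun p _ => ?_) (fun p hp => ?_)
          · exact Finset.sum_nonneg (fun j _ => pow_nonneg (Real.rpow_nonneg (Nat.cast_nonneg _) _) _)
          · exact aux_geom (htp p hp).1 (htp p hp).2 _
      _ = Real.exp (∑ p ∈ P, 4 * ((p:ℝ) ^ (-σ))) := (Real.exp_sum _ _).symm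
      _ = Real.exp (4 * ∑ p ∈ P, (p:ℝ) ^ (-σ)) := by rw [Finset.mul_sum]
  -- Step D : sum over primes ≤ 36 u
  have hstepD : ∑ p ∈ P, (p:ℝ) ^ (-σ) ≤ 36 * u := by
    have hPY : ∀ p ∈ P, p ≤ ⌊y⌋₊ := by
      intro p hp
      simp only [hPdef, Finset.mem_filter, Finset.mem_range] at hp
      omega
    refine le_trans (aux_sum_blocks P hPprime ⌊y⌋₊ hPY σ hσ0) ?_
    have hKl : ((Nat.log 2 ⌊y⌋₊ : ℕ):ℝ) * Real.log 2 ≤ ℓ := by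
      have hy1' : 1 ≤ ⌊y⌋₊ := by
        refine Nat.le_floor ?_
        push_cast
        nlinarith
      have h2K : (2:ℕ)^(Nat.log 2 ⌊y⌋₊) ≤ ⌊y⌋₊ := Nat.pow_log_le_self 2 (by omega)
      have h2KR : ((2:ℝ))^(Nat.log 2 ⌊y⌋₊ : ℕ) ≤ y := by
        calc ((2:ℝ))^(Nat.log 2 ⌊y⌋₊ : ℕ) = (((2:ℕ)^(Nat.log 2 ⌊y⌋₊) : ℕ) : ℝ) := by push_cast; ring
          _ ≤ (⌊y⌋₊ : ℝ) := by exact_mod_cast h2K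
          _ ≤ y := Nat.floor_le (le_of_lt hypos)
      calc ((Nat.log 2 ⌊y⌋₊ : ℕ):ℝ) * Real.log 2 = Real.log ((2:ℝ)^(Nat.log 2 ⌊y⌋₊ : ℕ)) := by
            rw [Real.log_pow]
        _ ≤ ℓ := Real.log_le_log (by positivity) h2KR
    have := aux_analytic (Nat.log 2 ⌊y⌋₊) δ u ℓ hδ0 hδhalf hKl (by nlinarith) hδl hu hlogl_u
    calc ∑ k ∈ Finset.Icc 1 (Nat.log 2 ⌊y⌋₊), (4 * 2^k / k) * ((2:ℝ)^k) ^ (-σ)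
        = ∑ k ∈ Finset.Icc 1 (Nat.log 2 ⌊y⌋₊), (4 * 2^k / k) * ((2:ℝ)^k) ^ (-(1-δ)) := by rfl
      _ ≤ 36 * u := this
  -- Combine
  have hfinal : x ^ σ * Real.exp (4 * (36 * u)) ≤
      x * Real.exp (-(1/2) * u * Real.log u) := by
    have hxσ : x ^ σ = Real.exp (L * σ) := Real.rpow_def_of_pos hxpos σ
    have hxe : x = Real.exp L := (Real.exp_log hxpos).symm
    rw [hxσ, ← Real.exp_add]
    conv_rhs => rw [hxe, ← Real.exp_add]
    rw [Real.exp_le_exp]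
    have hLu : L = u * ℓ := by
      rw [hudef]; field_simp
    have hδL : δ * L = u * Real.log u := by
      rw [hLu, hδdef]
      field_simp
    have hneed : 144 * u + (1/2) * (u * Real.log u) ≤ u * Real.log u := by
      nlinarith
    calc L * σ + 4 * (36 * u) = L - δ * L + 144 * u := by rw [hσdef]; ring
      _ = L - u * Real.log u + 144 * u := by rw [hδL]
      _ ≤ L + -(1/2) * u * Real.log u := by nlinarith
  calc (smoothCount x y : ℝ) ≤ x ^ σ * ∑ n ∈ S, (n:ℝ) ^ (-σ) := hstepA
    _ ≤ x ^ σ * ∏ p ∈ P, ∑ j ∈ Finset.range (N+1), ((p:ℝ) ^ (-σ)) ^ j := by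
        refine mul_le_mul_of_nonneg_left hstepB (Real.rpow_nonneg (le_of_lt hxpos) _)
    _ ≤ x ^ σ * Real.exp (4 * ∑ p ∈ P, (p:ℝ) ^ (-σ)) := by
        refine mul_le_mul_of_nonneg_left hstepC (Real.rpow_nonneg (le_of_lt hxpos) _)
    _ ≤ x ^ σ * Real.exp (4 * (36 * u)) := by
        refine mul_le_mul_of_nonneg_left ?_ (Real.rpow_nonneg (le_of_lt hxpos) _)
        rw [Real.exp_le_exp]
        linarith
    _ ≤ x * Real.exp (-(1/2) * u * Real.log u) := hfinal
end

section
/- Let α be a complex number. Define the arithmetic function v by v(n)/n = ∑_{dm=n} μ(d)·(σ(m)/φ(m))^{α/2} (the power taken as exp((α/2)·log(σ(m)/φ(m))) with the real logarithm of the positive real number σ(m)/φ(m)), and define b(n) = ∑_{dm=n} τ_{−α}(d)·v(m), where τ_{−α} is the multiplicative function with τ_{−α}(p^ν) = binom(−α+ν−1, ν) on prime powers. Then the series ∑_{n=1}^∞ |b(n)|/n^σ converges for every real σ > 1/2. -/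
/-- The generalized divisor function `τ_α`, the multiplicative function with
`τ_α(p^ν) = binom (α+ν-1) ν = (∏_{ℓ=1}^ν (α+ℓ-1)) / ν!` on prime powers. -/
noncomputable def tauC (α : ℂ) (n : ℕ) : ℂ :=
  ∏ p ∈ n.primeFactors,
    (∏ ℓ ∈ Finset.range (n.factorization p), (α + ℓ)) /
      (Nat.factorial (n.factorization p))

/-- The function `v` with `v(n)/n = ∑_{dm=n} μ(d) (σ(m)/φ(m))^{α/2}`, the power
taken as `exp((α/2) log(σ(m)/φ(m)))` with the real logarithm. -/
noncomputable def vfun (α : ℂ) (n : ℕ) : ℂ :=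
  (n : ℂ) * ∑ de ∈ n.divisorsAntidiagonal,
    (ArithmeticFunction.moebius de.1 : ℂ) *
      Complex.exp ((α / 2) *
        (Real.log ((ArithmeticFunction.sigma 1 de.2 : ℝ) / (Nat.totient de.2)) : ℂ))

/-- `b(n) = ∑_{dm=n} τ_{-α}(d) v(m)`. -/
noncomputable def bfun (α : ℂ) (n : ℕ) : ℂ :=
  ∑ dm ∈ n.divisorsAntidiagonal, tauC (-α) dm.1 * vfun α dm.2

open Finset Complex


lemma tauC_one (β : ℂ) : tauC β 1 = 1 := by simp [tauC]

lemma vfun_one (α : ℂ) : vfun α 1 = 1 := by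
  simp [vfun, Nat.divisorsAntidiagonal_one, ArithmeticFunction.sigma_one_apply]

lemma vfun_zero (α : ℂ) : vfun α 0 = 0 := by simp [vfun]

lemma bfun_one (α : ℂ) : bfun α 1 = 1 := by
  simp [bfun, Nat.divisorsAntidiagonal_one, tauC_one, vfun_one]

lemma bfun_zero (α : ℂ) : bfun α 0 = 0 := by simp [bfun]

lemma norm_exp_sub_one_le' (z : ℂ) : ‖Complex.exp z - 1‖ ≤ ‖z‖ * Real.exp ‖z‖ := by
  have hder : ∀ t ∈ Set.Icc (0:ℝ) 1,
      HasDerivWithinAt (fun t : ℝ => Complex.exp ((t:ℂ) * z))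
        (Complex.exp ((t:ℂ) * z) * z) (Set.Icc (0:ℝ) 1) t := by
    intro t _
    have h1 : HasDerivAt (fun w : ℂ => Complex.exp (w * z))
        (Complex.exp ((t:ℂ) * z) * z) ((t:ℝ) : ℂ) := by
      exact (Complex.hasDerivAt_exp ((t:ℂ)*z)).comp ((t:ℝ):ℂ)
        (hasDerivAt_mul_const z)
    exact (h1.comp_ofReal).hasDerivWithinAt
  have hbound : ∀ t ∈ Set.Ico (0:ℝ) 1,
      ‖Complex.exp ((t:ℂ) * z) * z‖ ≤ Real.exp ‖z‖ * ‖z‖ := by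
    intro t ht
    rw [norm_mul]
    gcongr
    rw [Complex.norm_exp]
    apply Real.exp_le_exp.2
    have : ((t:ℂ) * z).re = t * z.re := by simp
    rw [this]
    calc t * z.re ≤ |t * z.re| := le_abs_self _
    _ = |t| * |z.re| := abs_mul _ _
    _ ≤ 1 * ‖z‖ := by
        apply mul_le_mul (by rw [_root_.abs_of_nonneg ht.1]; exact le_of_lt ht.2) (Complex.abs_re_le_norm z)
          (abs_nonneg _) zero_le_one
    _ = ‖z‖ := one_mul _
  have := norm_image_sub_le_of_norm_deriv_le_segment' hder hbound 1
    (Set.right_mem_Icc.2 zero_le_one)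
  simpa [mul_comm] using this


noncomputable def fc (α : ℂ) (m : ℕ) : ℂ :=
  Complex.exp ((α / 2) *
    (Real.log ((ArithmeticFunction.sigma 1 m : ℝ) / (Nat.totient m)) : ℂ))

lemma le_sigma_one {m : ℕ} (hm : m ≠ 0) : m ≤ ArithmeticFunction.sigma 1 m := by
  rw [ArithmeticFunction.sigma_one_apply]
  exact Finset.single_le_sum (fun i _ => Nat.zero_le i) (Nat.mem_divisors_self m hm)

lemma sigma_one_pos {m : ℕ} (hm : m ≠ 0) : 0 < ArithmeticFunction.sigma 1 m :=
  lt_of_lt_of_le (Nat.pos_of_ne_zero hm) (le_sigma_one hm)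

lemma ratio_pos {m : ℕ} (hm : m ≠ 0) :
    (0:ℝ) < (ArithmeticFunction.sigma 1 m : ℝ) / (Nat.totient m) :=
  div_pos (by exact_mod_cast sigma_one_pos hm)
    (by exact_mod_cast Nat.totient_pos.2 (Nat.pos_of_ne_zero hm))

lemma fc_one (α : ℂ) : fc α 1 = 1 := by
  simp [fc, ArithmeticFunction.sigma_one_apply]

lemma fc_mul (α : ℂ) {m n : ℕ} (hm : m ≠ 0) (hn : n ≠ 0) (h : m.Coprime n) :
    fc α (m * n) = fc α m * fc α n := by
  unfold fc
  rw [← Complex.exp_add, ← mul_add]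
  congr 2
  have hσ : (ArithmeticFunction.sigma 1 (m * n) : ℝ)
      = (ArithmeticFunction.sigma 1 m : ℝ) * (ArithmeticFunction.sigma 1 n : ℝ) := by
    rw_mod_cast [ArithmeticFunction.isMultiplicative_sigma.map_mul_of_coprime h]
  have hφ : (Nat.totient (m * n) : ℝ) = (Nat.totient m : ℝ) * (Nat.totient n : ℝ) := by
    rw_mod_cast [Nat.totient_mul h]
  have key : Real.log ((ArithmeticFunction.sigma 1 (m*n) : ℝ) / (Nat.totient (m*n)))
      = Real.log ((ArithmeticFunction.sigma 1 m : ℝ) / (Nat.totient m))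
        + Real.log ((ArithmeticFunction.sigma 1 n : ℝ) / (Nat.totient n)) := by
    rw [hσ, hφ, ← div_mul_div_comm, Real.log_mul (ne_of_gt (ratio_pos hm)) (ne_of_gt (ratio_pos hn))]
  exact_mod_cast key


lemma tauC_mul (β : ℂ) {m n : ℕ} (hm : m ≠ 0) (hn : n ≠ 0) (h : m.Coprime n) :
    tauC β (m * n) = tauC β m * tauC β n := by
  unfold tauC
  rw [Nat.primeFactors_mul hm hn, Finset.prod_union (Nat.Coprime.disjoint_primeFactors h)]
  have hfac : (m * n).factorization = m.factorization + n.factorization :=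
    Nat.factorization_mul hm hn
  congr 1
  · refine Finset.prod_congr rfl fun p hp => ?_
    have hpn : n.factorization p = 0 := by
      apply Nat.factorization_eq_zero_of_not_dvd
      intro hdvd
      have hpm := Nat.dvd_of_mem_primeFactors hp
      have : p ∣ Nat.gcd m n := Nat.dvd_gcd hpm hdvd
      rw [h] at this
      exact (Nat.prime_of_mem_primeFactors hp).one_lt.ne' (Nat.eq_one_of_dvd_one this)
    rw [hfac, Finsupp.add_apply, hpn, add_zero]
  · refine Finset.prod_congr rfl fun p hp => ?_
    have hpm : m.factorization p = 0 := by
      apply Nat.factorization_eq_zero_of_not_dvd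
      intro hdvd
      have hpn := Nat.dvd_of_mem_primeFactors hp
      have : p ∣ Nat.gcd m n := Nat.dvd_gcd hdvd hpn
      rw [h] at this
      exact (Nat.prime_of_mem_primeFactors hp).one_lt.ne' (Nat.eq_one_of_dvd_one this)
    rw [hfac, Finsupp.add_apply, hpm, zero_add]

lemma tauC_prime_pow (β : ℂ) {p : ℕ} (hp : p.Prime) {k : ℕ} (hk : k ≠ 0) :
    tauC β (p ^ k) = (∏ ℓ ∈ Finset.range k, (β + ℓ)) / (Nat.factorial k) := by
  unfold tauC
  rw [Nat.primeFactors_prime_pow hk hp]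
  simp [Nat.Prime.factorization_pow, hp]


noncomputable def tAF (β : ℂ) : ArithmeticFunction ℂ :=
  ⟨fun n => if n = 0 then 0 else tauC β n, by simp⟩

noncomputable def fAF (α : ℂ) : ArithmeticFunction ℂ :=
  ⟨fun m => if m = 0 then 0 else fc α m, by simp⟩

lemma tAF_apply (β : ℂ) {n : ℕ} (hn : n ≠ 0) : tAF β n = tauC β n := if_neg hn

lemma fAF_apply (α : ℂ) {m : ℕ} (hm : m ≠ 0) : fAF α m = fc α m := if_neg hm

lemma tAF_isMult (β : ℂ) : (tAF β).IsMultiplicative := by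
  refine ⟨by rw [tAF_apply β one_ne_zero, tauC_one], fun {m n} h => ?_⟩
  rcases eq_or_ne m 0 with rfl | hm
  · simp
  rcases eq_or_ne n 0 with rfl | hn
  · simp
  rw [tAF_apply β (mul_ne_zero hm hn), tAF_apply β hm, tAF_apply β hn, tauC_mul β hm hn h]

lemma fAF_isMult (α : ℂ) : (fAF α).IsMultiplicative := by
  refine ⟨by rw [fAF_apply α one_ne_zero, fc_one], fun {m n} h => ?_⟩
  rcases eq_or_ne m 0 with rfl | hm
  · simp
  rcases eq_or_ne n 0 with rfl | hn
  · simp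
  rw [fAF_apply α (mul_ne_zero hm hn), fAF_apply α hm, fAF_apply α hn, fc_mul α hm hn h]

noncomputable def vAF (α : ℂ) : ArithmeticFunction ℂ :=
  ((ArithmeticFunction.id : ArithmeticFunction ℕ) : ArithmeticFunction ℂ).pmul
    (((ArithmeticFunction.moebius : ArithmeticFunction ℤ) : ArithmeticFunction ℂ) * fAF α)

lemma vAF_isMult (α : ℂ) : (vAF α).IsMultiplicative :=
  (ArithmeticFunction.isMultiplicative_id.natCast).pmul
    ((ArithmeticFunction.isMultiplicative_moebius.intCast).mul (fAF_isMult α))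

noncomputable def bAF (α : ℂ) : ArithmeticFunction ℂ := tAF (-α) * vAF α

lemma bAF_isMult (α : ℂ) : (bAF α).IsMultiplicative :=
  (tAF_isMult (-α)).mul (vAF_isMult α)

lemma vAF_apply (α : ℂ) (n : ℕ) : vAF α n = vfun α n := by
  rcases eq_or_ne n 0 with rfl | hn
  · simp [vfun]
  rw [vfun, vAF, ArithmeticFunction.pmul_apply, ArithmeticFunction.natCoe_apply,
    ArithmeticFunction.id_apply, ArithmeticFunction.mul_apply]
  congr 1
  refine Finset.sum_congr rfl fun de hde => ?_
  rw [ArithmeticFunction.intCoe_apply,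
    fAF_apply α (Nat.right_ne_zero_of_mem_divisorsAntidiagonal hde)]
  rfl

lemma bAF_apply (α : ℂ) (n : ℕ) : bAF α n = bfun α n := by
  rcases eq_or_ne n 0 with rfl | hn
  · simp [bfun]
  rw [bfun, bAF, ArithmeticFunction.mul_apply]
  refine Finset.sum_congr rfl fun dm hdm => ?_
  rw [tAF_apply (-α) (Nat.left_ne_zero_of_mem_divisorsAntidiagonal hdm), vAF_apply]

lemma bfun_mul (α : ℂ) {m n : ℕ} (h : m.Coprime n) :
    bfun α (m * n) = bfun α m * bfun α n := by
  rw [← bAF_apply, ← bAF_apply, ← bAF_apply, (bAF_isMult α).map_mul_of_coprime h]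


lemma prod_add_le (a : ℝ) (ha : 0 ≤ a) (i : ℕ) :
    ∏ ℓ ∈ Finset.range i, (a + ℓ) ≤ (Nat.factorial i : ℝ) * ((i:ℝ)+1)^(⌈a⌉₊) := by
  set m := ⌈a⌉₊ with hm
  induction i with
  | zero => simp
  | succ i ih =>
    rw [Finset.prod_range_succ, Nat.factorial_succ]
    have hai : (0:ℝ) ≤ a + i := by positivity
    have ham : a ≤ m := Nat.le_ceil a
    have hpos : (0:ℝ) < (i:ℝ) + 1 := by positivity
    have key : ((i:ℝ)+1)^m * ((i:ℝ)+1+m) ≤ ((i:ℝ)+1) * ((i:ℝ)+2)^m := by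
      have hb : (1:ℝ) + m * (1/((i:ℝ)+1)) ≤ (1 + 1/((i:ℝ)+1))^m := by
        apply one_add_mul_le_pow
        have : (0:ℝ) ≤ 1/((i:ℝ)+1) := by positivity
        linarith
      have h2 : ((i:ℝ)+2) = ((i:ℝ)+1) * (1+1/((i:ℝ)+1)) := by field_simp; ring
      calc ((i:ℝ)+1)^m * ((i:ℝ)+1+m)
          = ((i:ℝ)+1)^m * (((i:ℝ)+1) * (1 + m * (1/((i:ℝ)+1)))) := by
            rw [mul_one_add]
            field_simp
        _ ≤ ((i:ℝ)+1)^m * (((i:ℝ)+1) * (1+1/((i:ℝ)+1))^m) := by gcongr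
        _ = ((i:ℝ)+1) * ((i:ℝ)+2)^m := by rw [h2, mul_pow]; ring
    calc (∏ ℓ ∈ Finset.range i, (a + ℓ)) * (a + i)
        ≤ ((Nat.factorial i : ℝ) * ((i:ℝ)+1)^m) * (a + i) := by
          apply mul_le_mul_of_nonneg_right ih hai
      _ ≤ ((Nat.factorial i : ℝ) * ((i:ℝ)+1)^m) * (((i:ℝ)+1) + m) := by
          have : a + i ≤ ((i:ℝ)+1) + m := by linarith
          apply mul_le_mul_of_nonneg_left this (by positivity)
      _ = (Nat.factorial i : ℝ) * (((i:ℝ)+1)^m * ((i:ℝ)+1+m)) := by ring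
      _ ≤ (Nat.factorial i : ℝ) * (((i:ℝ)+1) * ((i:ℝ)+2)^m) := by
          apply mul_le_mul_of_nonneg_left key (by positivity)
      _ = (↑((i+1) * Nat.factorial i) : ℝ) * ((↑(i+1):ℝ)+1)^m := by push_cast; ring

lemma norm_tauC_prime_pow_le (α : ℂ) {p : ℕ} (hp : p.Prime) (i : ℕ) :
    ‖tauC (-α) (p^i)‖ ≤ ((i:ℝ)+1)^(⌈‖α‖⌉₊) := by
  rcases eq_or_ne i 0 with rfl | hi
  · simp [tauC_one]
  rw [tauC_prime_pow (-α) hp hi, norm_div]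
  have h1 : ‖∏ ℓ ∈ Finset.range i, (-α + (ℓ:ℂ))‖ ≤ ∏ ℓ ∈ Finset.range i, (‖α‖ + (ℓ:ℝ)) := by
    refine le_trans (norm_prod_le _ _) (Finset.prod_le_prod (fun _ _ => norm_nonneg _)
      fun ℓ _ => ?_)
    calc ‖-α + (ℓ:ℂ)‖ ≤ ‖-α‖ + ‖(ℓ:ℂ)‖ := norm_add_le _ _
      _ = ‖α‖ + ℓ := by rw [norm_neg]; simp
  have h2 : ‖((Nat.factorial i : ℕ) : ℂ)‖ = (Nat.factorial i : ℝ) := by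
    simp
  rw [h2, div_le_iff₀ (by positivity)]
  calc ‖∏ ℓ ∈ Finset.range i, (-α + (ℓ:ℂ))‖ ≤ ∏ ℓ ∈ Finset.range i, (‖α‖ + (ℓ:ℝ)) := h1
    _ ≤ (Nat.factorial i : ℝ) * ((i:ℝ)+1)^(⌈‖α‖⌉₊) := prod_add_le _ (norm_nonneg α) i
    _ = ((i:ℝ)+1)^(⌈‖α‖⌉₊) * (Nat.factorial i : ℝ) := by ring


noncomputable def Lg (m : ℕ) : ℝ :=
  Real.log ((ArithmeticFunction.sigma 1 m : ℝ) / (Nat.totient m))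

lemma fc_eq (α : ℂ) (m : ℕ) : fc α m = Complex.exp ((α/2) * (Lg m : ℂ)) := rfl


lemma Lg_nonneg {m : ℕ} (hm : m ≠ 0) : 0 ≤ Lg m := by
  apply Real.log_nonneg
  rw [le_div_iff₀ (by exact_mod_cast Nat.totient_pos.2 (Nat.pos_of_ne_zero hm)), one_mul]
  exact_mod_cast le_trans (Nat.totient_le m) (le_sigma_one hm)

lemma sigma_prime_pow_le {p : ℕ} (hp : p.Prime) (t : ℕ) :
    ArithmeticFunction.sigma 1 (p^t) ≤ 2 * p^t := by
  rw [ArithmeticFunction.sigma_one_apply_prime_pow hp]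
  induction t with
  | zero => simp
  | succ t ih =>
    rw [Finset.sum_range_succ]
    have h2 := hp.two_le
    have h1 : 2 * p^t ≤ p^(t+1) := by
      rw [pow_succ, mul_comm (p^t) p]
      exact Nat.mul_le_mul_right _ h2
    omega

lemma prime_pow_le_two_totient {p : ℕ} (hp : p.Prime) (t : ℕ) :
    p^t ≤ 2 * Nat.totient (p^t) := by
  rcases Nat.eq_zero_or_pos t with rfl | ht
  · simp
  rw [Nat.totient_prime_pow hp ht]
  have h2 := hp.two_le
  calc p^t = p^(t-1) * p := by rw [← pow_succ]; congr 1; omega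
    _ ≤ p^(t-1) * (2 * (p-1)) := Nat.mul_le_mul_left _ (by omega)
    _ = 2 * (p^(t-1) * (p-1)) := by ring

lemma Lg_prime_pow_le {p : ℕ} (hp : p.Prime) (t : ℕ) : Lg (p^t) ≤ Real.log 4 := by
  have hpt : (p:ℕ)^t ≠ 0 := pow_ne_zero _ hp.pos.ne'
  have hφ : (0:ℝ) < (Nat.totient (p^t) : ℝ) := by
    exact_mod_cast Nat.totient_pos.2 (Nat.pos_of_ne_zero hpt)
  apply Real.log_le_log (ratio_pos hpt)
  rw [div_le_iff₀ hφ]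
  have h1 : (ArithmeticFunction.sigma 1 (p^t) : ℝ) ≤ 2 * (p:ℝ)^t := by
    exact_mod_cast sigma_prime_pow_le hp t
  have h2 : ((p:ℝ))^t ≤ 2 * (Nat.totient (p^t) : ℝ) := by
    exact_mod_cast prime_pow_le_two_totient hp t
  linarith

lemma Lg_diff {p : ℕ} (hp : p.Prime) {j : ℕ} (hj : j ≠ 0) :
    0 ≤ Lg (p^j) - Lg (p^(j-1)) ∧ Lg (p^j) - Lg (p^(j-1)) ≤ 4/(p:ℝ)^j := by
  have hp2 : 2 ≤ p := hp.two_le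
  have hpowj : (p:ℕ)^j ≠ 0 := pow_ne_zero _ hp.pos.ne'
  have hpowj' : (p:ℕ)^(j-1) ≠ 0 := pow_ne_zero _ hp.pos.ne'
  set S := (ArithmeticFunction.sigma 1 (p^j) : ℝ) with hSdef
  set P := (Nat.totient (p^j) : ℝ) with hPdef
  set A := (ArithmeticFunction.sigma 1 (p^(j-1)) : ℝ) with hAdef
  set B := (Nat.totient (p^(j-1)) : ℝ) with hBdef
  have hS0 : 0 < S := by rw [hSdef]; exact_mod_cast sigma_one_pos hpowj
  have hP0 : 0 < P := by rw [hPdef]; exact_mod_cast Nat.totient_pos.2 (Nat.pos_of_ne_zero hpowj)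
  have hA0 : 0 < A := by rw [hAdef]; exact_mod_cast sigma_one_pos hpowj'
  have hB0 : 0 < B := by rw [hBdef]; exact_mod_cast Nat.totient_pos.2 (Nat.pos_of_ne_zero hpowj')
  have hAc : (p:ℝ)^(j-1) ≤ A := by rw [hAdef]; exact_mod_cast le_sigma_one hpowj'
  have hS : S = p * A + 1 := by
    rw [hSdef, hAdef]
    have : ArithmeticFunction.sigma 1 (p^j) = p * ArithmeticFunction.sigma 1 (p^(j-1)) + 1 := by
      obtain ⟨t, rfl⟩ : ∃ t, j = t + 1 := ⟨j - 1, (Nat.succ_pred_eq_of_pos (Nat.pos_of_ne_zero hj)).symm⟩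
      rw [ArithmeticFunction.sigma_one_apply_prime_pow hp,
        ArithmeticFunction.sigma_one_apply_prime_pow hp]
      rw [Finset.sum_range_succ']
      simp only [pow_zero, Nat.succ_sub_one]
      rw [Finset.mul_sum]
      congr 1
      exact Finset.sum_congr rfl fun k _ => (pow_succ' p k)
    exact_mod_cast this
  have hdiff : Lg (p^j) - Lg (p^(j-1)) = Real.log ((S/P)/(A/B)) := by
    rw [Real.log_div (ne_of_gt (div_pos hS0 hP0)) (ne_of_gt (div_pos hA0 hB0))]
    rfl
  set q := (S/P)/(A/B) with hqdef
  have hq0 : 0 < q := by positivity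
  suffices h : 1 ≤ q ∧ q ≤ 1 + 4/(p:ℝ)^j by
    refine ⟨by rw [hdiff]; exact Real.log_nonneg h.1, ?_⟩
    rw [hdiff]
    calc Real.log q ≤ q - 1 := Real.log_le_sub_one_of_pos hq0
      _ ≤ 4/(p:ℝ)^j := by linarith [h.2]
  have hppos : (0:ℝ) < (p:ℝ) := by exact_mod_cast hp.pos
  have hpjpos : (0:ℝ) < (p:ℝ)^j := by positivity
  rcases eq_or_ne j 1 with rfl | hj1
  · -- j = 1
    have hA1 : A = 1 := by
      rw [hAdef]; norm_num [ArithmeticFunction.sigma_one_apply]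
    have hB1 : B = 1 := by
      rw [hBdef]; norm_num
    have hP1 : P = (p:ℝ) - 1 := by
      rw [hPdef, pow_one, Nat.totient_prime hp, Nat.cast_sub hp.one_le, Nat.cast_one]
    have hS1 : S = (p:ℝ) + 1 := by rw [hS, hA1]; ring
    have hPpos : (0:ℝ) < (p:ℝ) - 1 := by
      have : (2:ℝ) ≤ (p:ℝ) := by exact_mod_cast hp2
      linarith
    have h2p : (2:ℝ) ≤ (p:ℝ) := by exact_mod_cast hp2
    have hq_eq1 : q = ((p:ℝ)+1)/((p:ℝ)-1) := by
      rw [hqdef, hA1, hB1, hS1, hP1]; norm_num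
    rw [hq_eq1]
    constructor
    · rw [le_div_iff₀ hPpos]; linarith
    · rw [pow_one, div_le_iff₀ hPpos]
      have h4p : 1 + 4/(p:ℝ) = ((p:ℝ) + 4)/(p:ℝ) := by field_simp
      rw [h4p, div_mul_eq_mul_div, le_div_iff₀ hppos]
      nlinarith
  · -- j ≥ 2
    have hj2 : 2 ≤ j := by omega
    have hP' : P = p * B := by
      rw [hPdef, hBdef]
      have : Nat.totient (p^j) = p * Nat.totient (p^(j-1)) := by
        rw [Nat.totient_prime_pow hp (by omega : 0 < j),
          Nat.totient_prime_pow hp (by omega : 0 < j - 1)]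
        rw [← mul_assoc, ← pow_succ']
        congr 2
        omega
      exact_mod_cast this
    have hq_eq : q = (p*A+1)/(p*A) := by
      rw [hqdef, hS, hP']
      field_simp
    have hpA0 : (0:ℝ) < p * A := by positivity
    rw [hq_eq]
    constructor
    · rw [le_div_iff₀ hpA0]; linarith
    · have hpj_le : (p:ℝ)^j ≤ p * A := by
        calc (p:ℝ)^j = p * (p:ℝ)^(j-1) := by
              rw [← pow_succ']; congr 1; omega
          _ ≤ p * A := by
              apply mul_le_mul_of_nonneg_left hAc (le_of_lt hppos)
      have hd : (0:ℝ) ≤ 4/(p:ℝ)^j := by positivity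
      have h4 : (4:ℝ) ≤ 4/(p:ℝ)^j * (p*A) := by
        calc (4:ℝ) = 4/(p:ℝ)^j * (p:ℝ)^j := by field_simp
          _ ≤ 4/(p:ℝ)^j * (p*A) := mul_le_mul_of_nonneg_left hpj_le hd
      rw [div_le_iff₀ hpA0]
      nlinarith


/-- constant bounding `‖fc α‖` on prime powers -/
noncomputable def C1 (α : ℂ) : ℝ := Real.exp (‖α‖/2 * Real.log 4)

lemma C1_pos (α : ℂ) : 0 < C1 α := Real.exp_pos _

lemma one_le_C1 (α : ℂ) : 1 ≤ C1 α := by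
  rw [C1, ← Real.exp_zero]
  apply Real.exp_le_exp.2
  have h4 : 0 ≤ Real.log 4 := Real.log_nonneg (by norm_num)
  positivity

lemma re_mul_ofReal_le (α : ℂ) {x : ℝ} (hx0 : 0 ≤ x) (hx : x ≤ Real.log 4) :
    ((α/2) * (x:ℂ)).re ≤ ‖α‖/2 * Real.log 4 := by
  have h1 : ((α/2) * (x:ℂ)).re = (α/2).re * x := by
    simp [Complex.mul_re]
  rw [h1]
  have h2 : |(α/2).re| ≤ ‖α‖/2 := by
    calc |(α/2).re| ≤ ‖α/2‖ := Complex.abs_re_le_norm _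
      _ = ‖α‖/2 := by rw [norm_div]; norm_num
  calc (α/2).re * x ≤ |(α/2).re| * x := by
        apply mul_le_mul_of_nonneg_right (le_abs_self _) hx0
    _ ≤ (‖α‖/2) * Real.log 4 := by
        apply mul_le_mul h2 hx hx0 (by positivity)

lemma norm_fc_le (α : ℂ) {p : ℕ} (hp : p.Prime) (t : ℕ) : ‖fc α (p^t)‖ ≤ C1 α := by
  rw [fc_eq, Complex.norm_exp, C1]
  exact Real.exp_le_exp.2 (re_mul_ofReal_le α (Lg_nonneg (pow_ne_zero _ hp.pos.ne'))
    (Lg_prime_pow_le hp t))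

lemma vfun_prime_pow (α : ℂ) {p : ℕ} (hp : p.Prime) {j : ℕ} (hj : j ≠ 0) :
    vfun α (p^j) = (p:ℂ)^j * (fc α (p^j) - fc α (p^(j-1))) := by
  have key : ∑ de ∈ (p^j).divisorsAntidiagonal, (ArithmeticFunction.moebius de.1 : ℂ) * fc α de.2
      = fc α (p^j) - fc α (p^(j-1)) := by
    rw [Nat.sum_divisorsAntidiagonal (fun d e => (ArithmeticFunction.moebius d : ℂ) * fc α e),
      Nat.divisors_prime_pow hp, Finset.sum_map]
    simp only [Function.Embedding.coeFn_mk]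
    have hterm : ∀ i ∈ Finset.range (j+1),
        (ArithmeticFunction.moebius (p^i) : ℂ) * fc α (p^j / p^i)
        = (if i = 0 then fc α (p^j) else 0) + (if i = 1 then -fc α (p^(j-1)) else 0) := by
      intro i hi
      have hij : i ≤ j := by
        have := Finset.mem_range.1 hi; omega
      rw [Nat.pow_div hij hp.pos]
      rcases eq_or_ne i 0 with rfl | hi0
      · simp [ArithmeticFunction.moebius_apply_one]
      rcases eq_or_ne i 1 with rfl | hi1
      · rw [pow_one, ArithmeticFunction.moebius_apply_prime hp]
        simp
      · rw [ArithmeticFunction.moebius_apply_prime_pow hp hi0, if_neg hi1]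
        simp [hi0, hi1]
    rw [Finset.sum_congr rfl hterm, Finset.sum_add_distrib,
      Finset.sum_ite_eq' (Finset.range (j+1)) 0 (fun _ => fc α (p^j)),
      Finset.sum_ite_eq' (Finset.range (j+1)) 1 (fun _ => -fc α (p^(j-1)))]
    rw [if_pos (Finset.mem_range.2 (by omega)), if_pos (Finset.mem_range.2 (by omega))]
    ring
  have hvf : vfun α (p^j) = (((p^j : ℕ)):ℂ) *
      ∑ de ∈ (p^j).divisorsAntidiagonal, (ArithmeticFunction.moebius de.1 : ℂ) * fc α de.2 := rfl
  rw [hvf, key]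
  push_cast
  ring

lemma norm_vfun_prime_pow_le (α : ℂ) {p : ℕ} (hp : p.Prime) {j : ℕ} (hj : j ≠ 0) :
    ‖vfun α (p^j)‖ ≤ 2*‖α‖*(C1 α)^2 := by
  have hC1 := C1_pos α
  have hppos : (0:ℝ) < (p:ℝ) := by exact_mod_cast hp.pos
  have hpj : (0:ℝ) < (p:ℝ)^j := by positivity
  set u : ℂ := (α/2) * ((Lg (p^j) - Lg (p^(j-1)) : ℝ) : ℂ) with hudef
  have hsplit : fc α (p^j) - fc α (p^(j-1)) = fc α (p^(j-1)) * (Complex.exp u - 1) := by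
    rw [fc_eq, fc_eq, mul_sub, mul_one, ← Complex.exp_add]
    congr 1
    rw [hudef, Complex.ofReal_sub]
    ring
  have hdiff := Lg_diff hp hj
  have hLglog : Lg (p^j) - Lg (p^(j-1)) ≤ Real.log 4 := by
    have := Lg_nonneg (pow_ne_zero (j-1) hp.pos.ne')
    have := Lg_prime_pow_le hp j
    linarith
  have hnormu : ‖u‖ = ‖α‖/2 * (Lg (p^j) - Lg (p^(j-1))) := by
    rw [hudef, norm_mul, Complex.norm_real, Real.norm_eq_abs, _root_.abs_of_nonneg hdiff.1,
      norm_div]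
    norm_num
  have hu1 : ‖u‖ ≤ 2*‖α‖/(p:ℝ)^j := by
    rw [hnormu]
    calc ‖α‖/2 * (Lg (p^j) - Lg (p^(j-1))) ≤ ‖α‖/2 * (4/(p:ℝ)^j) := by
          apply mul_le_mul_of_nonneg_left hdiff.2 (by positivity)
      _ = 2*‖α‖/(p:ℝ)^j := by field_simp; ring
  have hu2 : Real.exp ‖u‖ ≤ C1 α := by
    rw [C1]
    apply Real.exp_le_exp.2
    rw [hnormu]
    apply mul_le_mul_of_nonneg_left hLglog (by positivity)
  have hexpu : ‖Complex.exp u - 1‖ ≤ (2*‖α‖/(p:ℝ)^j) * C1 α := by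
    calc ‖Complex.exp u - 1‖ ≤ ‖u‖ * Real.exp ‖u‖ := norm_exp_sub_one_le' u
      _ ≤ (2*‖α‖/(p:ℝ)^j) * C1 α := by
          apply mul_le_mul hu1 hu2 (Real.exp_nonneg _) (by positivity)
  rw [vfun_prime_pow α hp hj, hsplit, norm_mul, norm_mul, norm_pow, Complex.norm_natCast]
  calc (p:ℝ)^j * (‖fc α (p^(j-1))‖ * ‖Complex.exp u - 1‖)
      ≤ (p:ℝ)^j * (C1 α * ((2*‖α‖/(p:ℝ)^j) * C1 α)) := by
        apply mul_le_mul_of_nonneg_left _ (le_of_lt hpj)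
        apply mul_le_mul (norm_fc_le α hp _) hexpu (norm_nonneg _) (le_of_lt hC1)
    _ = 2*‖α‖*(C1 α)^2 := by field_simp


/-- uniform bound for `‖vfun‖` on prime powers, also covering exponent `0`. -/
noncomputable def Cv (α : ℂ) : ℝ := max (2*‖α‖*(C1 α)^2) 1


lemma Cv_pos (α : ℂ) : 0 < Cv α := lt_of_lt_of_le one_pos (le_max_right _ _)

lemma norm_vfun_le (α : ℂ) {p : ℕ} (hp : p.Prime) (j : ℕ) :
    ‖vfun α (p^j)‖ ≤ Cv α := by
  rcases eq_or_ne j 0 with rfl | hj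
  · rw [pow_zero, vfun_one, norm_one]; exact le_max_right _ _
  · exact le_trans (norm_vfun_prime_pow_le α hp hj) (le_max_left _ _)

lemma card_divisorsAntidiagonal_prime_pow {p : ℕ} (hp : p.Prime) (k : ℕ) :
    ((p^k : ℕ).divisorsAntidiagonal).card = k + 1 := by
  rw [← Nat.map_div_right_divisors, Finset.card_map, Nat.divisors_prime_pow hp,
    Finset.card_map, Finset.card_range]

lemma norm_bfun_prime_pow_le (α : ℂ) {p : ℕ} (hp : p.Prime) (k : ℕ) :
    ‖bfun α (p^k)‖ ≤ Cv α * ((k:ℝ)+1)^(⌈‖α‖⌉₊ + 1) := by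
  have hterm : ∀ x ∈ (p^k : ℕ).divisorsAntidiagonal,
      ‖tauC (-α) x.1 * vfun α x.2‖ ≤ ((k:ℝ)+1)^(⌈‖α‖⌉₊) * Cv α := by
    intro x hx
    obtain ⟨hxy, hne⟩ := Nat.mem_divisorsAntidiagonal.1 hx
    have hdvd1 : x.1 ∣ p^k := ⟨x.2, hxy.symm⟩
    have hdvd2 : x.2 ∣ p^k := ⟨x.1, by rw [← hxy]; ring⟩
    obtain ⟨i, hik, hx1⟩ := (Nat.dvd_prime_pow hp).1 hdvd1
    obtain ⟨l, hlk, hx2⟩ := (Nat.dvd_prime_pow hp).1 hdvd2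
    rw [hx1, hx2, norm_mul]
    apply mul_le_mul _ (norm_vfun_le α hp l) (norm_nonneg _) (by positivity)
    calc ‖tauC (-α) (p^i)‖ ≤ ((i:ℝ)+1)^(⌈‖α‖⌉₊) := norm_tauC_prime_pow_le α hp i
      _ ≤ ((k:ℝ)+1)^(⌈‖α‖⌉₊) := by
          apply pow_le_pow_left₀ (by positivity)
          have : (i:ℝ) ≤ (k:ℝ) := by exact_mod_cast hik
          linarith
  calc ‖bfun α (p^k)‖ ≤ ∑ x ∈ (p^k : ℕ).divisorsAntidiagonal,
        ‖tauC (-α) x.1 * vfun α x.2‖ := norm_sum_le _ _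
    _ ≤ ((p^k : ℕ).divisorsAntidiagonal).card • (((k:ℝ)+1)^(⌈‖α‖⌉₊) * Cv α) :=
        Finset.sum_le_card_nsmul _ _ _ hterm
    _ = ((k:ℝ)+1) * (((k:ℝ)+1)^(⌈‖α‖⌉₊) * Cv α) := by
        rw [card_divisorsAntidiagonal_prime_pow hp, nsmul_eq_mul]
        push_cast
        ring
    _ = Cv α * ((k:ℝ)+1)^(⌈‖α‖⌉₊ + 1) := by rw [pow_succ]; ring


lemma tauC_prime (β : ℂ) {p : ℕ} (hp : p.Prime) : tauC β p = β := by
  have := tauC_prime_pow β hp (k := 1) one_ne_zero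
  rw [pow_one] at this
  rw [this]
  simp

lemma bfun_prime_eq (α : ℂ) {p : ℕ} (hp : p.Prime) :
    bfun α p = vfun α p - α := by
  have hb : bfun α p = ∑ d ∈ (p : ℕ).divisors, tauC (-α) d * vfun α (p / d) :=
    Nat.sum_divisorsAntidiagonal (fun d e => tauC (-α) d * vfun α e)
  rw [hb, hp.divisors, Finset.sum_insert (by simp [hp.one_lt.ne]), Finset.sum_singleton]
  rw [Nat.div_one, Nat.div_self hp.pos, tauC_one, tauC_prime (-α) hp, vfun_one]
  ring

lemma Lg_prime (p : ℕ) (hp : p.Prime) :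
    Lg p = Real.log (((p:ℝ)+1)/((p:ℝ)-1)) := by
  have hσ : (ArithmeticFunction.sigma 1 p : ℝ) = (p:ℝ) + 1 := by
    have := ArithmeticFunction.sigma_one_apply_prime_pow (p := p) (i := 1) hp
    rw [pow_one] at this
    rw [this]
    push_cast [Finset.sum_range_succ]
    ring
  have hφ : ((Nat.totient p : ℕ) : ℝ) = (p:ℝ) - 1 := by
    rw [Nat.totient_prime hp, Nat.cast_sub hp.one_le, Nat.cast_one]
  rw [Lg, hσ, hφ]

lemma Lg_prime_bounds {p : ℕ} (hp : p.Prime) :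
    Lg p ≤ 2/((p:ℝ)-1) ∧ 2/((p:ℝ)+1) ≤ Lg p := by
  have h2p : (2:ℝ) ≤ (p:ℝ) := by exact_mod_cast hp.two_le
  have hppos : (0:ℝ) < (p:ℝ) := by linarith
  have hP : (0:ℝ) < (p:ℝ) - 1 := by linarith
  have hQ : (0:ℝ) < (p:ℝ) + 1 := by linarith
  rw [Lg_prime p hp]
  constructor
  · calc Real.log (((p:ℝ)+1)/((p:ℝ)-1)) ≤ ((p:ℝ)+1)/((p:ℝ)-1) - 1 :=
        Real.log_le_sub_one_of_pos (by positivity)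
      _ = 2/((p:ℝ)-1) := by field_simp; ring
  · have key : Real.log (((p:ℝ)-1)/((p:ℝ)+1)) ≤ -(2/((p:ℝ)+1)) := by
      calc Real.log (((p:ℝ)-1)/((p:ℝ)+1)) ≤ ((p:ℝ)-1)/((p:ℝ)+1) - 1 :=
          Real.log_le_sub_one_of_pos (by positivity)
        _ = -(2/((p:ℝ)+1)) := by field_simp; ring
    have hinv : (((p:ℝ)+1)/((p:ℝ)-1)) = (((p:ℝ)-1)/((p:ℝ)+1))⁻¹ := by
      rw [inv_div]
    rw [hinv, Real.log_inv]
    linarith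

lemma norm_bfun_prime_le (α : ℂ) {p : ℕ} (hp : p.Prime)
    (hbig : (⌈‖α‖⌉₊ + 2 : ℕ) ≤ p) :
    ‖bfun α p‖ ≤ (4*‖α‖^2 + 2*‖α‖)/(p:ℝ) := by
  have h2p : (2:ℝ) ≤ (p:ℝ) := by exact_mod_cast hp.two_le
  have hppos : (0:ℝ) < (p:ℝ) := by linarith
  have hP : (0:ℝ) < (p:ℝ) - 1 := by linarith
  have hα_le : ‖α‖ ≤ (p:ℝ) - 2 := by
    have h1 : (⌈‖α‖⌉₊ : ℝ) + 2 ≤ (p:ℝ) := by exact_mod_cast hbig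
    have h2 : ‖α‖ ≤ (⌈‖α‖⌉₊ : ℝ) := Nat.le_ceil _
    linarith
  set L := Lg p with hLdef
  have hL := Lg_prime_bounds hp
  have hL0 : 0 ≤ L := Lg_nonneg hp.pos.ne'
  set u : ℂ := (α/2) * (L : ℂ) with hudef
  have hnormu : ‖u‖ = ‖α‖/2 * L := by
    rw [hudef, norm_mul, Complex.norm_real, Real.norm_eq_abs, _root_.abs_of_nonneg hL0,
      norm_div]
    norm_num
  have hu_le : ‖u‖ ≤ ‖α‖/((p:ℝ)-1) := by
    rw [hnormu]
    calc ‖α‖/2 * L ≤ ‖α‖/2 * (2/((p:ℝ)-1)) :=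
        mul_le_mul_of_nonneg_left hL.1 (by positivity)
      _ = ‖α‖/((p:ℝ)-1) := by
        field_simp
  have hu1 : ‖u‖ ≤ 1 := by
    apply le_trans hu_le
    rw [div_le_one hP]
    linarith
  -- decomposition
  have hbp : bfun α p = (p:ℂ) * (Complex.exp u - 1 - u) + ((α/2) * (((p:ℝ)*L - 2 : ℝ) : ℂ)) := by
    rw [bfun_prime_eq α hp]
    have hv : vfun α p = (p:ℂ) * (fc α p - 1) := by
      have := vfun_prime_pow α hp (j := 1) one_ne_zero
      rw [pow_one, pow_zero, pow_one, fc_one] at this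
      exact this
    rw [hv, fc_eq]
    push_cast
    rw [← hLdef, ← hudef]
    ring
  rw [hbp]
  have hX : ‖(p:ℂ) * (Complex.exp u - 1 - u)‖ ≤ 4*‖α‖^2/(p:ℝ) := by
    rw [norm_mul, Complex.norm_natCast]
    have hE : ‖Complex.exp u - 1 - u‖ ≤ ‖u‖^2 := by
      exact Complex.norm_exp_sub_one_sub_id_le (x := u) hu1
    have hu2 : ‖u‖^2 ≤ (‖α‖/((p:ℝ)-1))^2 := by
      apply pow_le_pow_left₀ (norm_nonneg _) hu_le
    calc (p:ℝ) * ‖Complex.exp u - 1 - u‖ ≤ (p:ℝ) * (‖α‖/((p:ℝ)-1))^2 :=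
        mul_le_mul_of_nonneg_left (le_trans hE hu2) (le_of_lt hppos)
      _ ≤ 4*‖α‖^2/(p:ℝ) := by
        rw [div_pow, mul_div_assoc', div_le_div_iff₀ (by positivity) hppos]
        have hpa : (0:ℝ) ≤ ‖α‖^2 := by positivity
        have h4 : (0:ℝ) ≤ ((p:ℝ)-2)*(3*(p:ℝ)-2) := by nlinarith
        nlinarith [mul_nonneg hpa h4]
  have hY : ‖(α/2) * (((p:ℝ)*L - 2 : ℝ) : ℂ)‖ ≤ 2*‖α‖/(p:ℝ) := by
    rw [norm_mul, Complex.norm_real, Real.norm_eq_abs, norm_div]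
    have habs : |(p:ℝ)*L - 2| ≤ 2/((p:ℝ)-1) := by
      rw [abs_le]
      constructor
      · -- 2 - pL ≤ 2/(p-1), from pL ≥ 2p/(p+1) = 2 - 2/(p+1)
        have h1 : 2/((p:ℝ)+1) * (p:ℝ) ≤ (p:ℝ) * L := by
          rw [mul_comm (p:ℝ) L]
          exact mul_le_mul_of_nonneg_right hL.2 (le_of_lt hppos)
        have h2 : 2/((p:ℝ)+1) * (p:ℝ) = 2 - 2/((p:ℝ)+1) := by field_simp; ring
        have h3 : 2/((p:ℝ)+1) ≤ 2/((p:ℝ)-1) := by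
          apply div_le_div_of_nonneg_left (by norm_num) hP (by linarith)
        linarith
      · have h1 : (p:ℝ) * L ≤ 2/((p:ℝ)-1) * (p:ℝ) := by
          rw [mul_comm (p:ℝ) L]
          exact mul_le_mul_of_nonneg_right hL.1 (le_of_lt hppos)
        have h2 : 2/((p:ℝ)-1) * (p:ℝ) = 2 + 2/((p:ℝ)-1) := by field_simp; ring
        linarith
    have hnorm2 : ‖(2:ℂ)‖ = 2 := by norm_num
    rw [hnorm2]
    calc ‖α‖/2 * |(p:ℝ)*L - 2| ≤ ‖α‖/2 * (2/((p:ℝ)-1)) :=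
        mul_le_mul_of_nonneg_left habs (by positivity)
      _ = ‖α‖/((p:ℝ)-1) := by
        rw [div_mul_div_comm, mul_comm (2:ℝ) ((p:ℝ)-1),
          mul_div_mul_right _ _ (by norm_num : (2:ℝ) ≠ 0)]
      _ ≤ 2*‖α‖/(p:ℝ) := by
        rw [div_le_div_iff₀ hP hppos]
        nlinarith [norm_nonneg α]
  calc ‖(p:ℂ) * (Complex.exp u - 1 - u) + ((α/2) * (((p:ℝ)*L - 2 : ℝ) : ℂ))‖
      ≤ ‖(p:ℂ) * (Complex.exp u - 1 - u)‖ + ‖(α/2) * (((p:ℝ)*L - 2 : ℝ) : ℂ)‖ :=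
        norm_add_le _ _
    _ ≤ 4*‖α‖^2/(p:ℝ) + 2*‖α‖/(p:ℝ) := add_le_add hX hY
    _ = (4*‖α‖^2 + 2*‖α‖)/(p:ℝ) := by ring


section Assembly


/-- summability of polynomially-shifted geometric series -/
lemma summable_shift_pow_mul_geometric (M c : ℕ) {r : ℝ} (hr0 : 0 < r) (hr1 : r < 1) :
    Summable (fun k : ℕ => ((k:ℝ)+c)^M * r^k) := by
  have h0 : Summable (fun n : ℕ => (n:ℝ)^M * r^n) :=
    summable_pow_mul_geometric_of_norm_lt_one M (by rwa [Real.norm_eq_abs, abs_of_pos hr0])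
  have h1 : Summable (fun k : ℕ => ((k+c : ℕ):ℝ)^M * r^(k+c)) :=
    (summable_nat_add_iff c).2 h0
  have h2 : Summable (fun k : ℕ => (((k+c : ℕ):ℝ)^M * r^(k+c)) * (r^c)⁻¹) :=
    h1.mul_right _
  apply h2.congr
  intro k
  rw [pow_add, ← mul_assoc, mul_inv_cancel_right₀ (pow_ne_zero c hr0.ne')]
  push_cast
  ring

set_option maxHeartbeats 2000000 in
theorem stmt15 (α : ℂ) (σ : ℝ) (hσ : 1/2 < σ) :
    Summable (fun n : ℕ => ‖bfun α n‖ / (n : ℝ) ^ σ) := by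
  set F : ℕ → ℝ := fun n => ‖bfun α n‖ / (n : ℝ) ^ σ with hFdef
  have hσ0 : 0 < σ := by linarith
  set M : ℕ := ⌈‖α‖⌉₊ + 1 with hMdef
  set p₀ : ℕ := ⌈‖α‖⌉₊ + 2 with hp₀def
  set y : ℝ := ((2:ℝ)^σ)⁻¹ with hydef
  have h2σ : (1:ℝ) < (2:ℝ)^σ := by
    rw [show (1:ℝ) = (2:ℝ)^(0:ℝ) by simp]
    exact Real.rpow_lt_rpow_of_exponent_lt one_lt_two hσ0
  have hy0 : 0 < y := by rw [hydef]; positivity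
  have hy1 : y < 1 := by
    rw [hydef, inv_lt_one_iff₀]
    right; exact h2σ
  have hFnonneg : ∀ n, 0 ≤ F n := fun n => by positivity
  have hF0 : F 0 = 0 := by simp [hFdef, bfun_zero]
  have hF1 : F 1 = 1 := by simp [hFdef, bfun_one]
  -- multiplicativity
  have hmul : ∀ {m n : ℕ}, Nat.Coprime m n → F (m * n) = F m * F n := by
    intro m n h
    rw [hFdef]
    simp only
    rw [bfun_mul α h, norm_mul, Nat.cast_mul,
      Real.mul_rpow (Nat.cast_nonneg m) (Nat.cast_nonneg n), div_mul_div_comm]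
  -- prime power bound
  have hFpk : ∀ {p : ℕ}, p.Prime → ∀ k : ℕ,
      F (p^k) ≤ Cv α * (((k:ℝ)+1)^M * (((p:ℝ)^σ)⁻¹)^k) := by
    intro p hp k
    have hp0 : (0:ℝ) < (p:ℝ) := by exact_mod_cast hp.pos
    have hden : ((p^k : ℕ):ℝ)^σ = ((p:ℝ)^σ)^k := by
      push_cast
      rw [← Real.rpow_natCast (p:ℝ) k, ← Real.rpow_natCast ((p:ℝ)^σ) k,
        ← Real.rpow_mul hp0.le, ← Real.rpow_mul hp0.le, mul_comm]
    have hdenpos : (0:ℝ) < ((p:ℝ)^σ)^k := by positivity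
    rw [hFdef]
    simp only
    rw [hden, div_le_iff₀ hdenpos]
    calc ‖bfun α (p^k)‖ ≤ Cv α * ((k:ℝ)+1)^(⌈‖α‖⌉₊ + 1) := norm_bfun_prime_pow_le α hp k
      _ = Cv α * (((k:ℝ)+1)^M * (((p:ℝ)^σ)⁻¹)^k) * ((p:ℝ)^σ)^k := by
          have hPk : (0:ℝ) < ((p:ℝ)^σ) := by
            have hp0 : (0:ℝ) < (p:ℝ) := by exact_mod_cast hp.pos
            positivity
          have hconst : ((((p:ℝ)^σ)⁻¹)^k) * ((p:ℝ)^σ)^k = 1 := by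
            rw [← mul_pow, inv_mul_cancel₀ (ne_of_gt hPk), one_pow]
          calc Cv α * ((k:ℝ)+1)^(⌈‖α‖⌉₊+1)
              = Cv α * ((k:ℝ)+1)^M * (((((p:ℝ)^σ)⁻¹)^k) * ((p:ℝ)^σ)^k) := by
                rw [hconst, mul_one, hMdef]
            _ = Cv α * (((k:ℝ)+1)^M * (((p:ℝ)^σ)⁻¹)^k) * ((p:ℝ)^σ)^k := by ring
  have hxy : ∀ {p : ℕ}, p.Prime → ((p:ℝ)^σ)⁻¹ ≤ y := by
    intro p hp
    rw [hydef]
    apply inv_anti₀ (by positivity)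
    apply Real.rpow_le_rpow (by norm_num) (by exact_mod_cast hp.two_le) hσ0.le
  have hx0 : ∀ {p : ℕ}, p.Prime → (0:ℝ) < ((p:ℝ)^σ)⁻¹ := by
    intro p hp
    have hp0 : (0:ℝ) < (p:ℝ) := by exact_mod_cast hp.pos
    positivity
  have hx1 : ∀ {p : ℕ}, p.Prime → ((p:ℝ)^σ)⁻¹ < 1 := fun {p} hp =>
    lt_of_le_of_lt (hxy hp) hy1
  -- local summability
  have hsum : ∀ {p : ℕ}, p.Prime → Summable (fun k : ℕ => F (p^k)) := by
    intro p hp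
    apply Summable.of_nonneg_of_le (fun k => hFnonneg _) (fun k => hFpk hp k)
    exact ((summable_shift_pow_mul_geometric M 1 (hx0 hp) (hx1 hp)).mul_left (Cv α)).congr
      (fun k => by push_cast; ring)
  -- tail constants
  have hCa0 : (0:ℝ) ≤ 4*‖α‖^2 + 2*‖α‖ := by positivity
  set Ca : ℝ := 4*‖α‖^2 + 2*‖α‖ with hCadef
  have hgeo3 : Summable (fun k : ℕ => ((k:ℝ)+3)^M * y^k) :=
    summable_shift_pow_mul_geometric M 3 hy0 hy1
  set D : ℝ := Cv α * ∑' k : ℕ, ((k:ℝ)+3)^M * y^k with hDdef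
  have hD0 : (0:ℝ) ≤ D := by
    rw [hDdef]
    exact mul_nonneg (Cv_pos α).le (tsum_nonneg fun k => by positivity)
  set T : ℕ → ℝ := fun p => ∑' k : ℕ, F (p^(k+1)) with hTdef
  have hT0 : ∀ p, 0 ≤ T p := fun p => tsum_nonneg fun k => hFnonneg _
  set G : ℕ → ℝ := fun n => Ca * (((n:ℝ)^(1+σ))⁻¹) + D * (((n:ℝ)^(2*σ))⁻¹) with hGdef
  have hG0 : ∀ n, 0 ≤ G n := by
    intro n
    rw [hGdef]
    have h1 : (0:ℝ) ≤ ((n:ℝ)^(1+σ))⁻¹ := by positivity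
    have h2 : (0:ℝ) ≤ ((n:ℝ)^(2*σ))⁻¹ := by positivity
    exact add_nonneg (mul_nonneg hCa0 h1) (mul_nonneg hD0 h2)
  have hGsum : Summable G := by
    apply Summable.add
    · exact (Real.summable_nat_rpow_inv.2 (by linarith)).mul_left Ca
    · exact (Real.summable_nat_rpow_inv.2 (by linarith)).mul_left D
  -- bound T p for large primes
  have hTG : ∀ {p : ℕ}, p.Prime → p₀ ≤ p → T p ≤ G p := by
    intro p hp hpp
    have hp0 : (0:ℝ) < (p:ℝ) := by exact_mod_cast hp.pos
    have hpσ : (0:ℝ) < (p:ℝ)^σ := by positivity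
    have hshift1 : Summable (fun k : ℕ => F (p^(k+1))) := (summable_nat_add_iff 1).2 (hsum hp)
    have hshift2 : Summable (fun k : ℕ => F (p^(k+1+1))) := (summable_nat_add_iff 1).2 hshift1
    have hTsplit : T p = F (p^(0+1)) + ∑' k : ℕ, F (p^(k+1+1)) := by
      rw [hTdef]
      exact Summable.tsum_eq_zero_add hshift1
    have h1 : F (p^(0+1)) ≤ Ca * (((p:ℝ)^(1+σ))⁻¹) := by
      have hds : (p:ℝ)^(1+σ) = (p:ℝ) * (p:ℝ)^σ := by
        rw [Real.rpow_add hp0, Real.rpow_one]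
      have hnum : ‖bfun α (p^(0+1))‖ ≤ Ca/(p:ℝ) := by
        rw [zero_add, pow_one, hCadef]
        exact norm_bfun_prime_le α hp (by rw [← hp₀def]; exact hpp)
      calc F (p^(0+1)) = ‖bfun α (p^(0+1))‖ / ((p^(0+1) : ℕ):ℝ)^σ := rfl
        _ ≤ (Ca/(p:ℝ)) / ((p^(0+1) : ℕ):ℝ)^σ := by
            gcongr
        _ = Ca * (((p:ℝ)^(1+σ))⁻¹) := by
            rw [zero_add, pow_one, div_div, hds, div_eq_mul_inv]
    have h2 : ∑' k : ℕ, F (p^(k+1+1)) ≤ D * (((p:ℝ)^(2*σ))⁻¹) := by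
      set x : ℝ := ((p:ℝ)^σ)⁻¹ with hxdef
      have hx0' : 0 ≤ x := (hx0 hp).le
      have hx2 : x^2 = ((p:ℝ)^(2*σ))⁻¹ := by
        rw [hxdef, inv_pow, pow_two, ← Real.rpow_add hp0, two_mul]
      have hterm : ∀ k : ℕ, F (p^(k+1+1)) ≤ (Cv α * (((k:ℝ)+3)^M * y^k)) * x^2 := by
        intro k
        calc F (p^(k+1+1)) ≤ Cv α * ((((k+1+1 : ℕ):ℝ)+1)^M * x^(k+1+1)) := hFpk hp (k+1+1)
          _ = (Cv α * (((k:ℝ)+3)^M * x^k)) * x^2 := by push_cast; ring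
          _ ≤ (Cv α * (((k:ℝ)+3)^M * y^k)) * x^2 := by
              have hxk : x^k ≤ y^k := pow_le_pow_left₀ hx0' (hxy hp) k
              have hk3 : (0:ℝ) ≤ ((k:ℝ)+3)^M := by positivity
              have hx2' : (0:ℝ) ≤ x^2 := by positivity
              apply mul_le_mul_of_nonneg_right _ hx2'
              apply mul_le_mul_of_nonneg_left _ (Cv_pos α).le
              exact mul_le_mul_of_nonneg_left hxk hk3
      calc ∑' k : ℕ, F (p^(k+1+1))
          ≤ ∑' k : ℕ, ((Cv α * (((k:ℝ)+3)^M * y^k)) * x^2) :=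
            Summable.tsum_le_tsum hterm hshift2 ((hgeo3.mul_left (Cv α)).mul_right _)
        _ = (∑' k : ℕ, (Cv α * (((k:ℝ)+3)^M * y^k))) * x^2 := tsum_mul_right
        _ = D * x^2 := by rw [tsum_mul_left, hDdef]
        _ = D * (((p:ℝ)^(2*σ))⁻¹) := by rw [hx2]
    have hGp : G p = Ca * (((p:ℝ)^(1+σ))⁻¹) + D * (((p:ℝ)^(2*σ))⁻¹) := rfl
    rw [hTsplit, hGp]
    exact add_le_add h1 h2
  -- sum of T over primes below N is uniformly bounded
  set M₂ : ℝ := ∑ p ∈ Nat.primesBelow p₀, T p with hM2def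
  set M₀ : ℝ := M₂ + ∑' n, G n with hM0def
  have hTsum_le : ∀ N : ℕ, ∑ p ∈ Nat.primesBelow N, T p ≤ M₀ := by
    intro N
    rw [← Finset.sum_filter_add_sum_filter_not (Nat.primesBelow N) (· < p₀) T, hM0def]
    have hpart1 : ∑ p ∈ (Nat.primesBelow N).filter (· < p₀), T p ≤ M₂ := by
      rw [hM2def]
      apply Finset.sum_le_sum_of_subset_of_nonneg
      · intro p hpmem
        simp only [Finset.mem_filter] at hpmem
        exact Nat.mem_primesBelow.2 ⟨hpmem.2, Nat.prime_of_mem_primesBelow hpmem.1⟩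
      · exact fun p _ _ => hT0 p
    have hpart2 : ∑ p ∈ (Nat.primesBelow N).filter (fun p => ¬ p < p₀), T p ≤ ∑' n, G n := by
      calc ∑ p ∈ (Nat.primesBelow N).filter (fun p => ¬ p < p₀), T p
          ≤ ∑ p ∈ (Nat.primesBelow N).filter (fun p => ¬ p < p₀), G p := by
            apply Finset.sum_le_sum
            intro p hpmem
            simp only [Finset.mem_filter, not_lt] at hpmem
            exact hTG (Nat.prime_of_mem_primesBelow hpmem.1) hpmem.2
        _ ≤ ∑' n, G n := Summable.sum_le_tsum _ (fun n _ => hG0 n) hGsum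
    linarith
  -- partial sums of F are bounded
  have hnorm : ∀ {p : ℕ}, p.Prime → Summable (fun k : ℕ => ‖F (p^k)‖) := fun {p} hp =>
    (hsum hp).congr fun k => (Real.norm_of_nonneg (hFnonneg _)).symm
  have hbound : ∀ N : ℕ, ∑ i ∈ Finset.range N, F i ≤ Real.exp M₀ := by
    intro N
    obtain ⟨hsm, hhs⟩ := EulerProduct.summable_and_hasSum_smoothNumbers_prod_primesBelow_tsum
      hF1 hmul hnorm N
    have hsmF : Summable (fun m : N.smoothNumbers => F m) :=
      hsm.congr fun m => Real.norm_of_nonneg (hFnonneg _)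
    have hind : Summable (Set.indicator N.smoothNumbers F) :=
      summable_subtype_iff_indicator.1 hsmF
    have hstep : ∀ i ∈ Finset.range N, F i ≤ Set.indicator N.smoothNumbers F i := by
      intro i hi
      rcases eq_or_ne i 0 with rfl | hi0
      · rw [hF0]
        exact Set.indicator_nonneg (fun n _ => hFnonneg n) 0
      · have hmem : i ∈ N.smoothNumbers := Nat.mem_smoothNumbers.2
          ⟨hi0, fun q hq => lt_of_le_of_lt
            (Nat.le_of_dvd (Nat.pos_of_ne_zero hi0) (Nat.dvd_of_mem_primeFactorsList hq))
            (Finset.mem_range.1 hi)⟩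
        rw [Set.indicator_of_mem hmem]
    calc ∑ i ∈ Finset.range N, F i
        ≤ ∑ i ∈ Finset.range N, Set.indicator N.smoothNumbers F i := Finset.sum_le_sum hstep
      _ ≤ ∑' i, Set.indicator N.smoothNumbers F i :=
          Summable.sum_le_tsum _ (fun i _ => Set.indicator_nonneg (fun n _ => hFnonneg n) i) hind
      _ = ∑' (m : N.smoothNumbers), F m := (_root_.tsum_subtype _ _).symm
      _ = ∏ p ∈ N.primesBelow, ∑' k : ℕ, F (p^k) := hhs.tsum_eq
      _ ≤ ∏ p ∈ N.primesBelow, Real.exp (T p) := by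
          apply Finset.prod_le_prod
          · exact fun p _ => tsum_nonneg fun k => hFnonneg _
          · intro p hpmem
            have hp := Nat.prime_of_mem_primesBelow hpmem
            have hSp : ∑' k : ℕ, F (p^k) = 1 + T p := by
              rw [Summable.tsum_eq_zero_add (hsum hp), pow_zero, hF1, hTdef]
            rw [hSp]
            have := Real.add_one_le_exp (T p)
            linarith
      _ = Real.exp (∑ p ∈ N.primesBelow, T p) := (Real.exp_sum _ _).symm
      _ ≤ Real.exp M₀ := Real.exp_le_exp.2 (hTsum_le N)
  exact summable_of_sum_range_le hFnonneg hbound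

end Assembly
end
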